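/- Let λ > 0 and n ≥ 2, let x ∈ ℝ^{n-1}, ν > 0, and for ξ ∈ ℝ^{n-1} \ {x} set ξ^{x,ν} = x + ν²(ξ−x)/|ξ−x|². Then for all ξ, z ∈ ℝ^{n-1} with |ξ−x| > ν and |z−x| > ν, the kernel k(x,ν;ξ,z) = (|ξ−x|/ν)^λ |ξ^{x,ν} − z|^λ − |ξ − z|^λ is strictly positive. -/

import Mathlib

theorem kernel_positive (n : ℕ) (hn : 2 ≤ n) (lam ν : ℝ) (hlam : 0 < lam) (hν : 0 < ν)
    (x ξ z : EuclideanSpace ℝ (Fin (n - 1))) (hξ : ν < ‖ξ - x‖) (hz : ν < ‖z - x‖) :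
    0 < (‖ξ - x‖ / ν) ^ lam * ‖(x + (ν ^ 2 / ‖ξ - x‖ ^ 2) • (ξ - x)) - z‖ ^ lam
        - ‖ξ - z‖ ^ lam := by
  set a := ξ - x with ha
  set b := z - x with hb
  set t : ℝ := ν ^ 2 / ‖a‖ ^ 2 with ht
  have ha0 : (0:ℝ) < ‖a‖ := lt_trans hν hξ
  have hrw : x + t • a - z = t • a - b := by
    rw [hb]; abel
  rw [hrw]
  have hab : ξ - z = a - b := by simp [ha, hb]
  rw [hab]
  -- key quadratic identity
  have hexp : ‖t • a - b‖ ^ 2 = t^2 * ‖a‖^2 - 2 * t * inner ℝ a b + ‖b‖^2 := by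
    rw [norm_sub_sq_real, norm_smul, real_inner_smul_left]
    simp [mul_pow, abs_of_pos (div_pos (pow_pos hν 2) (pow_pos ha0 2))]
    ring
  have hexp2 : ‖a - b‖ ^ 2 = ‖a‖^2 - 2 * inner ℝ a b + ‖b‖^2 := by
    rw [norm_sub_sq_real]
  have ht0 : t * ‖a‖^2 = ν^2 := by
    rw [ht, div_mul_cancel₀ _ (pow_pos ha0 2).ne']
  have key : ‖a - b‖ < (‖a‖ / ν) * ‖t • a - b‖ := by
    have hpos : (0:ℝ) ≤ (‖a‖ / ν) * ‖t • a - b‖ :=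
      mul_nonneg (div_nonneg (norm_nonneg _) hν.le) (norm_nonneg _)
    refine lt_of_pow_lt_pow_left₀ 2 hpos ?_
    have : ((‖a‖ / ν) * ‖t • a - b‖)^2 - ‖a - b‖^2
        = (‖a‖^2/ν^2 - 1) * (‖b‖^2 - ν^2) := by
      rw [mul_pow, div_pow, hexp, hexp2]
      have hν2 : ν^2 ≠ 0 := (pow_pos hν 2).ne'
      have ha2 : ‖a‖^2 ≠ 0 := (pow_pos ha0 2).ne'
      field_simp [ht]
      linear_combination (t * ‖a‖^2 + ν^2 - 2 * inner ℝ a b) * ht0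
    have h1 : 0 < ‖a‖^2/ν^2 - 1 := by
      have := one_lt_div (pow_pos hν 2) |>.mpr (pow_lt_pow_left₀ hξ hν.le two_ne_zero)
      linarith
    have h2 : 0 < ‖b‖^2 - ν^2 := by
      have := pow_lt_pow_left₀ hz hν.le two_ne_zero
      linarith
    nlinarith [mul_pos h1 h2]
  have hlt : ‖a - b‖ ^ lam < ((‖a‖ / ν) * ‖t • a - b‖) ^ lam :=
    Real.rpow_lt_rpow (norm_nonneg _) key hlam
  rw [Real.mul_rpow (div_nonneg (norm_nonneg _) hν.le) (norm_nonneg _)] at hlt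
  linarith
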